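/- Let k ≥ 4 and let a ≥ 1, b ≥ 1, h ≥ 0 be integers with a + b + h ≤ k. Let W' be a set of size k, let B, H ⊆ W' be disjoint with |B| = b, |H| = h, and let A be a uniformly random subset of W' of size a. Write κ = a b / k and κ'' = (a − 1) h / (k − b). Then P(|A ∩ B| = 1 and A ∩ H ≠ ∅) ≤ κ''·κ. -/

import Mathlib

open Finset
private lemma aux2 {α} [DecidableEq α] (s : Finset α) (x y : α) (hx : x ∈ s) (hy : y ∈ s) (hxy : x ≠ y) (n : ℕ) :
    ((s.powersetCard (n+2)).filter (fun A => x ∈ A ∧ y ∈ A)).card = (s.card - 2).choose n := by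
  have hc : ((s.erase x).erase y).card = s.card - 2 := by
    rw [card_erase_of_mem (mem_erase.2 ⟨hxy.symm, hy⟩), card_erase_of_mem hx]; omega
  rw [← hc, ← Finset.card_powersetCard n ((s.erase x).erase y)]
  apply Finset.card_bij (fun A _ => (A.erase x).erase y)
  · rintro A hA
    simp only [mem_filter, mem_powersetCard] at hA
    obtain ⟨⟨hAs, hAcard⟩, hxA, hyA⟩ := hA
    rw [mem_powersetCard]
    constructor
    · intro z hz
      simp only [mem_erase] at hz ⊢
      exact ⟨hz.1, hz.2.1, hAs hz.2.2⟩
    · rw [card_erase_of_mem (mem_erase.2 ⟨hxy.symm, hyA⟩), card_erase_of_mem hxA, hAcard]; omega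
  · rintro A hA A' hA' hEq
    simp only [mem_filter, mem_powersetCard] at hA hA'
    have : insert x (insert y ((A.erase x).erase y)) = insert x (insert y ((A'.erase x).erase y)) := by rw [hEq]
    rwa [insert_erase (mem_erase.2 ⟨hxy.symm, hA.2.2⟩), insert_erase hA.2.1,
      insert_erase (mem_erase.2 ⟨hxy.symm, hA'.2.2⟩), insert_erase hA'.2.1] at this
  · rintro C hC
    rw [mem_powersetCard] at hC
    refine ⟨insert x (insert y C), ?_, ?_⟩
    · simp only [mem_filter, mem_powersetCard]
      have hxC : x ∉ insert y C := by
        simp only [mem_insert]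
        rintro (rfl | hxC)
        · exact hxy rfl
        · exact (mem_erase.1 (mem_erase.1 (hC.1 hxC)).2).1 rfl
      have hyC : y ∉ C := fun hyC => (mem_erase.1 (hC.1 hyC)).1 rfl
      refine ⟨⟨?_, ?_⟩, mem_insert_self _ _, mem_insert_of_mem (mem_insert_self _ _)⟩
      · intro z hz
        simp only [mem_insert] at hz
        rcases hz with rfl | rfl | hz
        · exact hx
        · exact hy
        · exact (mem_of_mem_erase (mem_of_mem_erase (hC.1 hz)))
      · rw [card_insert_of_notMem hxC, card_insert_of_notMem hyC, hC.2]
    · have hxC : x ∉ C := fun h => (mem_erase.1 (mem_erase.1 (hC.1 h)).2).1 rfl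
      have hyC : y ∉ C := fun h => (mem_erase.1 (hC.1 h)).1 rfl
      have hx' : x ∉ insert y C := by simp [hxy, hxC]
      rw [erase_insert hx', erase_insert hyC]


/-- **Lemma 1, inequality (8)** (Bloznelis 2010): for a uniformly random `a`-element
subset `A` of a `k`-element set `W'` and fixed disjoint subsets `B, H ⊆ W'` with
`|B| = b`, `|H| = h`, `a + b + h ≤ k` and `k ≥ 4`, writing `κ = ab/k` and
`κ'' = (a-1)h/(k-b)`, `P(|A ∩ B| = 1, A ∩ H ≠ ∅) ≤ κ'' κ`. -/
theorem stmt_6 {α : Type*} [DecidableEq α] (k a b h : ℕ) (hk : 4 ≤ k)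
    (ha : 1 ≤ a) (hb : 1 ≤ b) (habh : a + b + h ≤ k)
    (W' B H : Finset α) (hW : W'.card = k) (hBW : B ⊆ W') (hHW : H ⊆ W')
    (hdisj : Disjoint B H) (hB : B.card = b) (hH : H.card = h) :
    (((W'.powersetCard a).filter
        (fun A => (A ∩ B).card = 1 ∧ (A ∩ H).Nonempty)).card : ℝ) / (k.choose a) ≤
      (((a : ℝ) - 1) * h / ((k : ℝ) - b)) * (a * b / k : ℝ) := by
  rcases eq_or_lt_of_le ha with rfl | ha2
  · -- a = 1 : the filtered family is empty and RHS = 0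
    have hempty : (W'.powersetCard 1).filter
        (fun A => (A ∩ B).card = 1 ∧ (A ∩ H).Nonempty) = ∅ := by
      rw [Finset.filter_eq_empty_iff]
      rintro A hA ⟨h1, y, hy⟩
      rw [Finset.mem_powersetCard] at hA
      have hAB : A ∩ B = A := Finset.eq_of_subset_of_card_le
        (Finset.inter_subset_left) (by rw [hA.2, h1])
      have hyA : y ∈ A ∩ H := hy
      have : y ∈ B := by
        have := Finset.mem_inter.1 hyA
        have hAsub : A ⊆ B := by rw [← hAB]; exact Finset.inter_subset_right
        exact hAsub this.1
      exact Finset.disjoint_left.1 hdisj this (Finset.mem_inter.1 hyA).2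
    rw [hempty]
    norm_num
  · -- a ≥ 2
    obtain ⟨a', rfl⟩ : ∃ a', a = a' + 2 := ⟨a - 2, by omega⟩
    obtain ⟨k', rfl⟩ : ∃ k', k = k' + 2 := ⟨k - 2, by omega⟩
    set S := (W'.powersetCard (a' + 2)).filter
        (fun A => (A ∩ B).card = 1 ∧ (A ∩ H).Nonempty) with hS
    -- union bound
    have hsub : S ⊆ (B ×ˢ H).biUnion (fun p =>
        (W'.powersetCard (a' + 2)).filter (fun A => p.1 ∈ A ∧ p.2 ∈ A)) := by
      intro A hA
      rw [hS, Finset.mem_filter] at hA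
      obtain ⟨hA1, h1, y, hy⟩ := hA
      have hne : (A ∩ B).Nonempty := Finset.card_pos.1 (by rw [h1]; norm_num)
      obtain ⟨x, hx⟩ := hne
      rw [Finset.mem_biUnion]
      refine ⟨(x, y), Finset.mem_product.2 ⟨(Finset.mem_inter.1 hx).2,
        (Finset.mem_inter.1 hy).2⟩, Finset.mem_filter.2 ⟨hA1,
        (Finset.mem_inter.1 hx).1, (Finset.mem_inter.1 hy).1⟩⟩
    have hcount : S.card ≤ b * h * ((k' + 2 - 2).choose a') := by
      calc S.card ≤ ((B ×ˢ H).biUnion (fun p =>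
            (W'.powersetCard (a' + 2)).filter (fun A => p.1 ∈ A ∧ p.2 ∈ A))).card :=
          Finset.card_le_card hsub
        _ ≤ ∑ p ∈ B ×ˢ H, ((W'.powersetCard (a' + 2)).filter
            (fun A => p.1 ∈ A ∧ p.2 ∈ A)).card := Finset.card_biUnion_le
        _ = ∑ p ∈ B ×ˢ H, ((k' + 2 - 2).choose a') := by
            apply Finset.sum_congr rfl
            rintro ⟨x, y⟩ hp
            rw [Finset.mem_product] at hp
            have hxy : x ≠ y := fun hEq =>
              Finset.disjoint_left.1 hdisj hp.1 (hEq ▸ hp.2)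
            have := aux2 W' x y (hBW hp.1) (hHW hp.2) hxy a'
            rwa [hW] at this
        _ = b * h * ((k' + 2 - 2).choose a') := by
            rw [Finset.sum_const, Finset.card_product, hB, hH, smul_eq_mul]
    simp only [Nat.add_sub_cancel] at hcount
    -- choose identity
    have hid : (a' + 2) * (a' + 1) * ((k' + 2).choose (a' + 2))
        = (k' + 2) * (k' + 1) * (k'.choose a') := by
      have h1 := Nat.add_one_mul_choose_eq (k' + 1) (a' + 1)
      have h2 := Nat.add_one_mul_choose_eq k' a'
      rw [show k' + 1 + 1 = k' + 2 from rfl, show a' + 1 + 1 = a' + 2 from rfl] at h1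
      calc (a' + 2) * (a' + 1) * ((k' + 2).choose (a' + 2))
          = ((k' + 2).choose (a' + 2) * (a' + 2)) * (a' + 1) := by ring
        _ = ((k' + 2) * ((k' + 1).choose (a' + 1))) * (a' + 1) := by rw [← h1]
        _ = (k' + 2) * ((k' + 1).choose (a' + 1) * (a' + 1)) := by ring
        _ = (k' + 2) * ((k' + 1) * k'.choose a') := by rw [← h2]
        _ = (k' + 2) * (k' + 1) * (k'.choose a') := by ring
    -- pass to reals
    have hak : a' + 2 ≤ k' + 2 := by omega
    have hc0 : (0 : ℝ) < ((k' + 2).choose (a' + 2) : ℝ) := by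
      exact_mod_cast Nat.choose_pos hak
    have hbk : (b : ℝ) < (k' + 2 : ℕ) := by exact_mod_cast (by omega : b < k' + 2)
    have hkb0 : (0 : ℝ) < ((k' + 2 : ℕ) : ℝ) - b := by linarith
    have hk0 : (0 : ℝ) < ((k' + 2 : ℕ) : ℝ) := by positivity
    have hidR : ((a' : ℝ) + 2) * ((a' : ℝ) + 1) * ((k' + 2).choose (a' + 2) : ℝ)
        = ((k' : ℝ) + 2) * ((k' : ℝ) + 1) * (k'.choose a' : ℝ) := by
      exact_mod_cast hid
    have hcountR : (S.card : ℝ) ≤ (b : ℝ) * h * (k'.choose a' : ℝ) := by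
      exact_mod_cast hcount
    rw [div_le_iff₀ hc0]
    push_cast
    have hstep : (b : ℝ) * h * (k'.choose a' : ℝ)
        ≤ (((a' : ℝ) + 2 - 1) * h / ((k' : ℝ) + 2 - b)) * (((a' : ℝ) + 2) * b / ((k' : ℝ) + 2))
          * ((k' + 2).choose (a' + 2) : ℝ) := by
      push_cast at hkb0 hk0
      rw [div_mul_div_comm, div_mul_eq_mul_div, le_div_iff₀ (by nlinarith)]
      have e : ((a' : ℝ) + 2 - 1) * h * (((a' : ℝ) + 2) * b) * ((k' + 2).choose (a' + 2) : ℝ)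
          = (h : ℝ) * b * (((k' : ℝ) + 2) * ((k' : ℝ) + 1)) * (k'.choose a' : ℝ) := by
        linear_combination ((h : ℝ) * b) * hidR
      rw [e]
      have hb1 : (1 : ℝ) ≤ (b : ℝ) := by exact_mod_cast hb
      have hnn : (0 : ℝ) ≤ (b : ℝ) * h * (k'.choose a' : ℝ) * ((k' : ℝ) + 2) := by positivity
      nlinarith [mul_le_mul_of_nonneg_left (by linarith : ((k' : ℝ) + 2 - b) ≤ (k' : ℝ) + 1) hnn]
    calc (S.card : ℝ) ≤ (b : ℝ) * h * (k'.choose a' : ℝ) := hcountR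
      _ ≤ _ := hstep
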